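/- Let 1 < p ≤ 2, α > 0, c ≥ 1/2 and x₁ ≥ c + 1. Then (x₁² + α²(x₁−c)²)^{p/2} − ((x₁−1)² + α²(x₁−c)²)^{p/2} ≥ p (x₁ − 1) / ((1 + α^{2−p}) x₁^{2−p} + α^{2−p} c^{2−p}). -/

import Mathlib

/-- Subadditivity of rpow with exponent in `[0,1]` on nonnegative reals. -/
lemma real_rpow_add_le_add_rpow {a b : ℝ} (ha : 0 ≤ a) (hb : 0 ≤ b) {q : ℝ}
    (hq0 : 0 ≤ q) (hq1 : q ≤ 1) : (a + b) ^ q ≤ a ^ q + b ^ q := by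
  have h := NNReal.rpow_add_le_add_rpow a.toNNReal b.toNNReal hq0 hq1
  have := NNReal.coe_le_coe.2 h
  push_cast at this
  rwa [Real.coe_toNNReal _ ha, Real.coe_toNNReal _ hb] at this

/-- Lower bound along the cone boundary `y = α(x₁ − c)` for `1 < p ≤ 2`. -/
theorem cone_boundary_lower_bound (p α c x₁ : ℝ) (hp1 : 1 < p) (hp2 : p ≤ 2)
    (hα : 0 < α) (hc : 1 / 2 ≤ c) (hx : c + 1 ≤ x₁) :
    p * (x₁ - 1) / ((1 + α ^ (2 - p)) * x₁ ^ (2 - p) + α ^ (2 - p) * c ^ (2 - p))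
      ≤ (x₁ ^ 2 + α ^ 2 * (x₁ - c) ^ 2) ^ (p / 2)
        - ((x₁ - 1) ^ 2 + α ^ 2 * (x₁ - c) ^ 2) ^ (p / 2) := by
  set K : ℝ := α ^ 2 * (x₁ - c) ^ 2 with hK
  have hxc : 0 < x₁ - c := by linarith
  have hK0 : 0 < K := by positivity
  have hx1 : (0:ℝ) < x₁ - 1 := by linarith
  have hx0 : (0:ℝ) < x₁ := by linarith
  -- MVT
  set f : ℝ → ℝ := fun z => (z ^ 2 + K) ^ (p / 2) with hf
  have hderiv : ∀ z : ℝ, 0 < z →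
      HasDerivAt f (p * z * (z ^ 2 + K) ^ (p / 2 - 1)) z := by
    intro z hz
    have h1 : HasDerivAt (fun z : ℝ => z ^ 2 + K) (2 * z) z := by
      simpa using (hasDerivAt_pow 2 z).add_const K
    have hne : z ^ 2 + K ≠ 0 := by positivity
    have := h1.rpow_const (p := p / 2) (Or.inl hne)
    convert this using 1
    ring
  obtain ⟨ξ, hξ, hξeq⟩ := exists_hasDerivAt_eq_slope f
      (fun z => p * z * (z ^ 2 + K) ^ (p / 2 - 1)) (by linarith : x₁ - 1 < x₁)
      (by
        have hcont : Continuous f := by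
          apply Continuous.rpow_const ((continuous_pow 2).add continuous_const)
          intro z; left; show z ^ 2 + K ≠ 0; positivity
        exact hcont.continuousOn)
      (fun z hz => hderiv z (by have := hz.1; linarith))
  have hξ0 : 0 < ξ := by have := hξ.1; linarith
  have hslope : f x₁ - f (x₁ - 1) = p * ξ * (ξ ^ 2 + K) ^ (p / 2 - 1) := by
    have : x₁ - (x₁ - 1) = 1 := by ring
    rw [this, div_one] at hξeq
    exact hξeq.symm
  rw [show (x₁ ^ 2 + K) ^ (p / 2) - ((x₁ - 1) ^ 2 + K) ^ (p / 2) = f x₁ - f (x₁ - 1) from rfl,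
    hslope]
  -- Bound the derivative at ξ from below
  have hexp : p / 2 - 1 ≤ 0 := by linarith
  have hξx : ξ ^ 2 + K ≤ x₁ ^ 2 + K := by
    have : ξ ^ 2 ≤ x₁ ^ 2 := by nlinarith [hξ.2, hξ0]
    linarith
  have h1 : (x₁ ^ 2 + K) ^ (p / 2 - 1) ≤ (ξ ^ 2 + K) ^ (p / 2 - 1) :=
    Real.rpow_le_rpow_of_nonpos (by positivity) hξx hexp |>.trans_eq rfl
  have h2 : p * (x₁ - 1) * (x₁ ^ 2 + K) ^ (p / 2 - 1) ≤ p * ξ * (ξ ^ 2 + K) ^ (p / 2 - 1) := by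
    have hξge : x₁ - 1 ≤ ξ := le_of_lt hξ.1
    have hpos : (0:ℝ) < (x₁ ^ 2 + K) ^ (p / 2 - 1) := by positivity
    have hp0 : (0:ℝ) < p := by linarith
    calc p * (x₁ - 1) * (x₁ ^ 2 + K) ^ (p / 2 - 1)
        ≤ p * ξ * (x₁ ^ 2 + K) ^ (p / 2 - 1) :=
          mul_le_mul_of_nonneg_right (mul_le_mul_of_nonneg_left hξge hp0.le) hpos.le
      _ ≤ p * ξ * (ξ ^ 2 + K) ^ (p / 2 - 1) :=
          mul_le_mul_of_nonneg_left h1 (by positivity)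
  refine le_trans ?_ h2
  -- Now bound p(x₁-1)/D ≤ p(x₁-1) (x₁²+K)^{p/2-1}
  have hrw : (x₁ ^ 2 + K) ^ (p / 2 - 1) = 1 / (x₁ ^ 2 + K) ^ ((2 - p) / 2) := by
    rw [show p / 2 - 1 = -((2 - p) / 2) by ring, Real.rpow_neg (by positivity), one_div]
  rw [hrw]
  rw [div_eq_mul_one_div]
  refine mul_le_mul_of_nonneg_left ?_ (by positivity)
  -- 1/D ≤ 1/(x₁²+K)^{(2-p)/2}, i.e. (x₁²+K)^{(2-p)/2} ≤ D
  have hq0 : (0:ℝ) ≤ (2 - p) / 2 := by linarith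
  have hq1 : (2 - p) / 2 ≤ 1 := by linarith
  have hsub : (x₁ ^ 2 + K) ^ ((2 - p) / 2)
      ≤ (x₁ ^ 2) ^ ((2 - p) / 2) + K ^ ((2 - p) / 2) :=
    real_rpow_add_le_add_rpow (by positivity) hK0.le hq0 hq1
  have hx1rw : (x₁ ^ 2) ^ ((2 - p) / 2) = x₁ ^ (2 - p) := by
    rw [← Real.rpow_natCast x₁ 2, ← Real.rpow_mul hx0.le]
    congr 1; push_cast; ring
  have hKrw : K ^ ((2 - p) / 2) = α ^ (2 - p) * (x₁ - c) ^ (2 - p) := by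
    rw [hK, Real.mul_rpow (by positivity) (by positivity),
      ← Real.rpow_natCast α 2, ← Real.rpow_natCast (x₁ - c) 2,
      ← Real.rpow_mul hα.le, ← Real.rpow_mul hxc.le]
    congr 1 <;> (push_cast; ring)
  have hKle : α ^ (2 - p) * (x₁ - c) ^ (2 - p) ≤ α ^ (2 - p) * x₁ ^ (2 - p) := by
    refine mul_le_mul_of_nonneg_left ?_ (by positivity)
    exact Real.rpow_le_rpow hxc.le (by linarith) (by linarith)
  have hD : (x₁ ^ 2 + K) ^ ((2 - p) / 2)
      ≤ (1 + α ^ (2 - p)) * x₁ ^ (2 - p) + α ^ (2 - p) * c ^ (2 - p) := by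
    have hcpos : (0:ℝ) ≤ α ^ (2 - p) * c ^ (2 - p) := by positivity
    calc (x₁ ^ 2 + K) ^ ((2 - p) / 2)
        ≤ (x₁ ^ 2) ^ ((2 - p) / 2) + K ^ ((2 - p) / 2) := hsub
      _ = x₁ ^ (2 - p) + α ^ (2 - p) * (x₁ - c) ^ (2 - p) := by rw [hx1rw, hKrw]
      _ ≤ x₁ ^ (2 - p) + α ^ (2 - p) * x₁ ^ (2 - p) := by linarith
      _ ≤ (1 + α ^ (2 - p)) * x₁ ^ (2 - p) + α ^ (2 - p) * c ^ (2 - p) := by ring_nf; linarith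
  exact one_div_le_one_div_of_le (by positivity) hD
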